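/- Let ts u ≤ tp u ≤ te u hold for all operations, let PO satisfy PO u v → tp u < tp v, let E satisfy the no-read-from-future condition E u v → (isWrite v ∨ tp u < tp v), and let T u v ↔ te u < ts v. Let C = [c₀, c₁, …, c_{k−1}] with k ≥ 2 be a cycle in the TGO execution graph, i.e. for each i the pair (c_i, c_{i+1 mod k}) is related by PO, E, or T. If c₀ = u and every operation v occurring in C with v ≠ u satisfies T v u, then there is an operation w occurring in C with E u w and isWrite w (indeed w = c₁, the successor of u in the cycle, is such a write). -/

import Mathlib

/-- **Locality Lemma for TGO cycles.** If `C` is a cycle (of length ≥ 2) in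
the TGO execution graph whose edges are `PO`, `E` or `T`, starting at `u`,
and every other operation of the cycle is before `u` in physical time order,
then the cycle contains a write operation `w` with `E u w`. -/
theorem tgo_cycle_write {Op : Type*} (ts tp te : Op → ℝ)
    (PO E : Op → Op → Prop) (isWrite : Op → Prop)
    (hlegal : ∀ u : Op, ts u ≤ tp u ∧ tp u ≤ te u)
    (hPO : ∀ u v : Op, PO u v → tp u < tp v)
    (hE : ∀ u v : Op, E u v → isWrite v ∨ tp u < tp v)
    (T : Op → Op → Prop)
    (hT : ∀ u v : Op, T u v ↔ te u < ts v)
    (C : List Op) (hk : 2 ≤ C.length)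
    (hcycle : ∀ i : Fin C.length,
      PO (C.get i) (C.get ⟨(i + 1) % C.length, Nat.mod_lt _ (by omega)⟩) ∨
      E (C.get i) (C.get ⟨(i + 1) % C.length, Nat.mod_lt _ (by omega)⟩) ∨
      T (C.get i) (C.get ⟨(i + 1) % C.length, Nat.mod_lt _ (by omega)⟩))
    (u : Op) (hu : C.get ⟨0, by omega⟩ = u)
    (hbefore : ∀ v ∈ C, v ≠ u → T v u) :
    (∃ w ∈ C, E u w ∧ isWrite w) ∧
    (E u (C.get ⟨1, by omega⟩) ∧ isWrite (C.get ⟨1, by omega⟩)) := by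
  set c1 := C.get ⟨1, by omega⟩ with hc1
  have hmem : c1 ∈ C := by rw [hc1]; exact List.get_mem _ _
  have hedge : PO u c1 ∨ E u c1 ∨ T u c1 := by
    rw [← hu, hc1]
    have h := hcycle ⟨0, by omega⟩
    simpa [Nat.mod_eq_of_lt (show 1 < C.length by omega)] using h
  have hl1 := hlegal u
  have hl2 := hlegal c1
  have key : E u c1 ∧ isWrite c1 := by
    by_cases hne : c1 = u
    · subst hne
      rcases hedge with h | h | h
      · exact absurd (hPO _ _ h) (lt_irrefl _)
      · rcases hE _ _ h with hw | hw
        · exact ⟨h, hw⟩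
        · exact absurd hw (lt_irrefl _)
      · rw [hT] at h; linarith
    · have hT1 : te c1 < ts u := (hT _ _).mp (hbefore _ hmem hne)
      have htp : tp c1 < tp u := by linarith
      rcases hedge with h | h | h
      · exact absurd (hPO _ _ h) (by linarith)
      · rcases hE _ _ h with hw | hw
        · exact ⟨h, hw⟩
        · linarith
      · rw [hT] at h; linarith
  exact ⟨⟨c1, hmem, key⟩, key⟩
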